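/- Let U ⊆ ℂ^m be open, let h be a hermitian metric on the trivial bundle F = U×ℂ^N with Chern connection D_j and curvature Θ_{jk}, and let W ⊆ ℂ^N be a complex linear subspace (defining the subbundle E = U×W with the induced metric). For t ∈ U let π(t) : ℂ^N → ℂ^N be the orthogonal projection onto W with respect to the inner product ⟨x,y⟩_{h(t)} = ⟪h(t)x, y⟫, and set π_⊥(t) = I − π(t). For smooth u : U → W define D^E_j u = π·(D_j u) and Θ^E_{jk} u = D^E_j(∂̄_k u) − ∂̄_k(D^E_j u). Then for all smooth maps u, v : U → W and all 1 ≤ j,k ≤ m, the identity ⟪h·Θ_{jk}·u, v⟫ = ⟪h·π_⊥(D_j u), π_⊥(D_k v)⟫ + ⟪h·Θ^E_{jk} u, v⟫ holds at every point of U. (Griffiths' formula (2.4) relating the curvature of a hermitian holomorphic subbundle to the curvature of the ambient bundle and the second fundamental form, Section 2.) -/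

import Mathlib

open Complex Matrix
open scoped ComplexOrder

noncomputable section

/-- The Wirtinger derivative `∂_w f (x)` in the direction `w`,
defined via the real Fréchet derivative. -/
def wD {E : Type*} [NormedAddCommGroup E] [NormedSpace ℂ E] (f : E → ℂ) (x w : E) : ℂ :=
  (fderiv ℝ f x w - Complex.I * fderiv ℝ f x (Complex.I • w)) / 2

/-- The Wirtinger derivative `∂̄_w f (x)` in the direction `w`. -/
def wDbar {E : Type*} [NormedAddCommGroup E] [NormedSpace ℂ E] (f : E → ℂ) (x w : E) : ℂ :=
  (fderiv ℝ f x w + Complex.I * fderiv ℝ f x (Complex.I • w)) / 2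

/-- The standard inner product `⟪x,y⟫ = Σ_i x_i·conj(y_i)` on `ℂ^N`. -/
def sip {N : ℕ} (x y : Fin N → ℂ) : ℂ := ∑ i, x i * (starRingEnd ℂ) (y i)

/-- Entrywise Wirtinger `∂_j` of a matrix-valued function. -/
def mD {m N : ℕ} (f : (Fin m → ℂ) → Matrix (Fin N) (Fin N) ℂ) (x : Fin m → ℂ) (j : Fin m) :
    Matrix (Fin N) (Fin N) ℂ :=
  Matrix.of fun a b => wD (fun s => f s a b) x (Pi.single j 1)

/-- Entrywise Wirtinger `∂̄_k` of a matrix-valued function. -/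
def mDbar {m N : ℕ} (f : (Fin m → ℂ) → Matrix (Fin N) (Fin N) ℂ) (x : Fin m → ℂ) (k : Fin m) :
    Matrix (Fin N) (Fin N) ℂ :=
  Matrix.of fun a b => wDbar (fun s => f s a b) x (Pi.single k 1)

/-- Entrywise Wirtinger `∂_j` of a vector-valued function. -/
def vD {m N : ℕ} (f : (Fin m → ℂ) → (Fin N → ℂ)) (x : Fin m → ℂ) (j : Fin m) : Fin N → ℂ :=
  fun a => wD (fun s => f s a) x (Pi.single j 1)

/-- Entrywise Wirtinger `∂̄_k` of a vector-valued function. -/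
def vDbar {m N : ℕ} (f : (Fin m → ℂ) → (Fin N → ℂ)) (x : Fin m → ℂ) (k : Fin m) : Fin N → ℂ :=
  fun a => wDbar (fun s => f s a) x (Pi.single k 1)

/-- The Chern connection `D_j u = ∂_j u + h⁻¹(∂_j h)·u` of the hermitian metric `h`. -/
def chern {m N : ℕ} (h : (Fin m → ℂ) → Matrix (Fin N) (Fin N) ℂ)
    (u : (Fin m → ℂ) → (Fin N → ℂ)) (j : Fin m) (t : Fin m → ℂ) : Fin N → ℂ :=
  vD u t j + ((h t)⁻¹ * mD h t j) *ᵥ u t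

/-- The curvature `Θ_{jk} = −∂̄_k(h⁻¹·∂_j h)` of the hermitian metric `h`. -/
def curv {m N : ℕ} (h : (Fin m → ℂ) → Matrix (Fin N) (Fin N) ℂ)
    (j k : Fin m) (t : Fin m → ℂ) : Matrix (Fin N) (Fin N) ℂ :=
  - mDbar (fun s => (h s)⁻¹ * mD h s j) t k

/-! ### Auxiliary lemmas: scalar Wirtinger calculus -/

section scalar
variable {E : Type*} [NormedAddCommGroup E] [NormedSpace ℂ E] {f g : E → ℂ} {x w : E}

lemma wD_congr (h : f =ᶠ[nhds x] g) (w : E) : wD f x w = wD g x w := by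
  unfold wD; rw [h.fderiv_eq]

lemma wDbar_congr (h : f =ᶠ[nhds x] g) (w : E) : wDbar f x w = wDbar g x w := by
  unfold wDbar; rw [h.fderiv_eq]

lemma wDbar_zero : wDbar (fun _ => (0:ℂ)) x w = 0 := by
  unfold wDbar; simp

lemma wD_add (hf : DifferentiableAt ℝ f x) (hg : DifferentiableAt ℝ g x) :
    wD (fun s => f s + g s) x w = wD f x w + wD g x w := by
  unfold wD; rw [fderiv_fun_add hf hg]; simp; ring

lemma wDbar_add (hf : DifferentiableAt ℝ f x) (hg : DifferentiableAt ℝ g x) :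
    wDbar (fun s => f s + g s) x w = wDbar f x w + wDbar g x w := by
  unfold wDbar; rw [fderiv_fun_add hf hg]; simp; ring

lemma wD_sub (hf : DifferentiableAt ℝ f x) (hg : DifferentiableAt ℝ g x) :
    wD (fun s => f s - g s) x w = wD f x w - wD g x w := by
  unfold wD; rw [fderiv_fun_sub hf hg]; simp; ring

lemma wDbar_sub (hf : DifferentiableAt ℝ f x) (hg : DifferentiableAt ℝ g x) :
    wDbar (fun s => f s - g s) x w = wDbar f x w - wDbar g x w := by
  unfold wDbar; rw [fderiv_fun_sub hf hg]; simp; ring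

lemma wD_mul (hf : DifferentiableAt ℝ f x) (hg : DifferentiableAt ℝ g x) :
    wD (fun s => f s * g s) x w = wD f x w * g x + f x * wD g x w := by
  unfold wD; rw [fderiv_fun_mul hf hg]; simp; ring

lemma wDbar_mul (hf : DifferentiableAt ℝ f x) (hg : DifferentiableAt ℝ g x) :
    wDbar (fun s => f s * g s) x w = wDbar f x w * g x + f x * wDbar g x w := by
  unfold wDbar; rw [fderiv_fun_mul hf hg]; simp; ring

lemma wDbar_conj :
    wDbar (fun s => (starRingEnd ℂ) (f s)) x w = (starRingEnd ℂ) (wD f x w) := by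
  unfold wD wDbar
  have h1 : fderiv ℝ (fun s => (starRingEnd ℂ) (f s)) x
      = (Complex.conjCLE : ℂ ≃L[ℝ] ℂ).toContinuousLinearMap.comp (fderiv ℝ f x) :=
    Complex.conjCLE.comp_fderiv
  rw [h1]
  simp only [map_div₀, map_sub, _root_.map_mul, Complex.conj_I, Complex.conjCLE_apply,
    ContinuousLinearMap.comp_apply, ContinuousLinearEquiv.coe_coe, Complex.conj_ofNat]
  ring

lemma wDbar_sum {ι : Type*} (s : Finset ι) (F : ι → E → ℂ)
    (hf : ∀ i ∈ s, DifferentiableAt ℝ (F i) x) :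
    wDbar (fun t => ∑ i ∈ s, F i t) x w = ∑ i ∈ s, wDbar (F i) x w := by
  unfold wDbar; rw [fderiv_fun_sum hf]
  simp only [ContinuousLinearMap.coe_sum', Finset.sum_apply, Finset.mul_sum]
  rw [← Finset.sum_add_distrib, ← Finset.sum_div]

end scalar

/-! ### Auxiliary lemmas: smoothness and Schwarz symmetry -/

section smooth
variable {E : Type*} [NormedAddCommGroup E] [NormedSpace ℂ E] {U : Set E} {f : E → ℂ}

lemma sm_diffAt (hU : IsOpen U) (hf : ContDiffOn ℝ (⊤:ℕ∞) f U) {t : E} (ht : t ∈ U) :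
    DifferentiableAt ℝ f t :=
  (hf.differentiableOn (by norm_cast)).differentiableAt (hU.mem_nhds ht)

lemma sm_fderiv_apply (hU : IsOpen U) (hf : ContDiffOn ℝ (⊤:ℕ∞) f U) (w : E) :
    ContDiffOn ℝ (⊤:ℕ∞) (fun s => fderiv ℝ f s w) U := by
  have hd : ContDiffOn ℝ (⊤:ℕ∞) (fderiv ℝ f) U :=
    hf.fderiv_of_isOpen hU (by norm_cast)
  exact (ContinuousLinearMap.apply ℝ ℂ w).contDiff.comp_contDiffOn hd

lemma sm_wD (hU : IsOpen U) (hf : ContDiffOn ℝ (⊤:ℕ∞) f U) (w : E) :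
    ContDiffOn ℝ (⊤:ℕ∞) (fun s => wD f s w) U := by
  unfold wD
  exact (((sm_fderiv_apply hU hf w).sub
    (contDiffOn_const.mul (sm_fderiv_apply hU hf (Complex.I • w)))).div_const 2)

lemma sm_wDbar (hU : IsOpen U) (hf : ContDiffOn ℝ (⊤:ℕ∞) f U) (w : E) :
    ContDiffOn ℝ (⊤:ℕ∞) (fun s => wDbar f s w) U := by
  unfold wDbar
  exact (((sm_fderiv_apply hU hf w).add
    (contDiffOn_const.mul (sm_fderiv_apply hU hf (Complex.I • w)))).div_const 2)

lemma sm_conj (hf : ContDiffOn ℝ (⊤:ℕ∞) f U) :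
    ContDiffOn ℝ (⊤:ℕ∞) (fun s => (starRingEnd ℂ) (f s)) U :=
  Complex.conjCLE.toContinuousLinearMap.contDiff.comp_contDiffOn hf

/-- Schwarz symmetry for mixed Wirtinger derivatives. -/
lemma wirtinger_symm (hU : IsOpen U) (hf : ContDiffOn ℝ (⊤:ℕ∞) f U) {t : E} (ht : t ∈ U)
    (w₁ w₂ : E) :
    wDbar (fun s => wD f s w₁) t w₂ = wD (fun s => wDbar f s w₂) t w₁ := by
  have hct : ContDiffAt ℝ (⊤:ℕ∞) f t := hf.contDiffAt (hU.mem_nhds ht)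
  have hsymm : IsSymmSndFDerivAt ℝ f t :=
    hct.isSymmSndFDerivAt (by rw [minSmoothness_of_isRCLikeNormedField]; exact WithTop.coe_le_coe.2 le_top)
  have hdF : DifferentiableAt ℝ (fderiv ℝ f) t := by
    have := hct.fderiv_right (m := (⊤:ℕ∞)) (by norm_cast)
    exact this.differentiableAt (by norm_cast)
  have key : ∀ a, HasFDerivAt (fun s => fderiv ℝ f s a)
      ((ContinuousLinearMap.apply ℝ ℂ a).comp (fderiv ℝ (fderiv ℝ f) t)) t := fun a =>
    (ContinuousLinearMap.apply ℝ ℂ a).hasFDerivAt.comp t hdF.hasFDerivAt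
  have keyf : ∀ a b, fderiv ℝ (fun s => fderiv ℝ f s a) t b = fderiv ℝ (fderiv ℝ f) t b a :=
    fun a b => by rw [(key a).fderiv]; rfl
  have expand1 : ∀ (w v : E),
      fderiv ℝ (fun s => (fderiv ℝ f s w - Complex.I * fderiv ℝ f s (Complex.I • w)) / 2) t v =
      (fderiv ℝ (fderiv ℝ f) t v w - Complex.I * fderiv ℝ (fderiv ℝ f) t v (Complex.I • w))/2 := by
    intro w v
    have H' : HasFDerivAt
        (fun s => (fderiv ℝ f s w - Complex.I * fderiv ℝ f s (Complex.I • w)) / 2) _ t :=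
      ((key w).sub ((key (Complex.I • w)).const_mul Complex.I)).mul_const ((2:ℂ)⁻¹)
    rw [H'.fderiv]
    simp [keyf]
    ring
  have expand2 : ∀ (w v : E),
      fderiv ℝ (fun s => (fderiv ℝ f s w + Complex.I * fderiv ℝ f s (Complex.I • w)) / 2) t v =
      (fderiv ℝ (fderiv ℝ f) t v w + Complex.I * fderiv ℝ (fderiv ℝ f) t v (Complex.I • w))/2 := by
    intro w v
    have H' : HasFDerivAt
        (fun s => (fderiv ℝ f s w + Complex.I * fderiv ℝ f s (Complex.I • w)) / 2) _ t :=
      ((key w).add ((key (Complex.I • w)).const_mul Complex.I)).mul_const ((2:ℂ)⁻¹)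
    rw [H'.fderiv]
    simp [keyf]
    ring
  unfold wDbar wD
  rw [expand1 w₁ w₂, expand1 w₁ (Complex.I • w₂), expand2 w₂ w₁, expand2 w₂ (Complex.I • w₁)]
  rw [hsymm w₂ w₁, hsymm w₂ (Complex.I • w₁), hsymm (Complex.I • w₂) w₁,
    hsymm (Complex.I • w₂) (Complex.I • w₁)]
  ring

end smooth

/-! ### Auxiliary lemmas: smoothness of matrix operations -/

section matsmooth
variable {E : Type*} [NormedAddCommGroup E] [NormedSpace ℂ E] {U : Set E}

lemma sm_finset_prod {ι : Type*} {s : Finset ι} {f : ι → E → ℂ}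
    (h : ∀ i ∈ s, ContDiffOn ℝ (⊤:ℕ∞) (f i) U) :
    ContDiffOn ℝ (⊤:ℕ∞) (fun x => ∏ i ∈ s, f i x) U := by
  classical
  induction s using Finset.induction with
  | empty => simpa using contDiffOn_const
  | insert a s' hni ih =>
    simp only [Finset.prod_insert hni]
    exact (h a (Finset.mem_insert_self a s')).mul
      (ih fun i hi => h i (Finset.mem_insert_of_mem hi))

lemma sm_det {n : Type*} [Fintype n] [DecidableEq n] {A : E → Matrix n n ℂ}
    (hA : ∀ a b, ContDiffOn ℝ (⊤:ℕ∞) (fun s => A s a b) U) :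
    ContDiffOn ℝ (⊤:ℕ∞) (fun s => (A s).det) U := by
  simp only [Matrix.det_apply]
  apply ContDiffOn.sum
  intro σ _
  have : (fun s => Equiv.Perm.sign σ • ∏ i, A s (σ i) i)
      = fun s => ((Equiv.Perm.sign σ : ℤ) : ℂ) * ∏ i, A s (σ i) i := by
    funext s; rw [Units.smul_def, zsmul_eq_mul]
  rw [this]
  exact contDiffOn_const.mul (sm_finset_prod fun i _ => hA (σ i) i)

lemma sm_mul_entries {p q r : Type*} [Fintype q] {A : E → Matrix p q ℂ} {B : E → Matrix q r ℂ}
    (hA : ∀ a b, ContDiffOn ℝ (⊤:ℕ∞) (fun s => A s a b) U)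
    (hB : ∀ a b, ContDiffOn ℝ (⊤:ℕ∞) (fun s => B s a b) U) :
    ∀ a b, ContDiffOn ℝ (⊤:ℕ∞) (fun s => (A s * B s) a b) U := by
  intro a b
  simp only [Matrix.mul_apply]
  exact ContDiffOn.sum fun c _ => (hA a c).mul (hB c b)

lemma sm_inv_entries {n : Type*} [Fintype n] [DecidableEq n] {A : E → Matrix n n ℂ}
    (hA : ∀ a b, ContDiffOn ℝ (⊤:ℕ∞) (fun s => A s a b) U)
    (hdet : ∀ s ∈ U, IsUnit (A s).det) :
    ∀ a b, ContDiffOn ℝ (⊤:ℕ∞) (fun s => (A s)⁻¹ a b) U := by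
  intro a b
  have hadj : ContDiffOn ℝ (⊤:ℕ∞) (fun s => (A s).adjugate a b) U := by
    simp only [Matrix.adjugate_apply]
    apply sm_det
    intro c d
    by_cases hc : c = b
    · subst hc; simp only [Matrix.updateRow_self]; exact contDiffOn_const
    · simp only [Matrix.updateRow_ne hc]; exact hA c d
  have hd : ContDiffOn ℝ (⊤:ℕ∞) (fun s => ((A s).det)⁻¹ * (A s).adjugate a b) U :=
    (ContDiffOn.inv (sm_det hA) fun s hs => (hdet s hs).ne_zero).mul hadj
  apply hd.congr
  intro s hs
  rw [Matrix.inv_def, Matrix.smul_apply, Ring.inverse_eq_inv', smul_eq_mul]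

end matsmooth

/-! ### Auxiliary lemmas: `sip` algebra and the smooth orthogonal projection -/

lemma sip_eq {N : ℕ} (x y : Fin N → ℂ) : sip x y = star y ⬝ᵥ x := by
  simp only [sip, dotProduct, Pi.star_apply, Complex.star_def]
  exact Finset.sum_congr rfl fun i _ => mul_comm _ _

lemma sip_sub_left {N : ℕ} (x y z : Fin N → ℂ) : sip (x - y) z = sip x z - sip y z := by
  simp [sip, sub_mul, Finset.sum_sub_distrib]

lemma sip_sub_right {N : ℕ} (x y z : Fin N → ℂ) : sip x (y - z) = sip x y - sip x z := by
  simp [sip, map_sub, mul_sub, Finset.sum_sub_distrib]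

lemma sip_add_right {N : ℕ} (x y z : Fin N → ℂ) : sip x (y + z) = sip x y + sip x z := by
  simp [sip, map_add, mul_add, Finset.sum_add_distrib]

lemma sip_hsub {N : ℕ} (hm : Matrix (Fin N) (Fin N) ℂ) (a b w : Fin N → ℂ) :
    sip (hm *ᵥ (a - b)) w = sip (hm *ᵥ a) w - sip (hm *ᵥ b) w := by
  rw [Matrix.mulVec_sub, sip_sub_left]

/-- Uniqueness of the `h`-orthogonal projection onto `W`. -/
lemma proj_unique {N : ℕ} {hmat : Matrix (Fin N) (Fin N) ℂ} (hpd : hmat.PosDef)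
    {W : Submodule ℂ (Fin N → ℂ)} {x p q : Fin N → ℂ}
    (hp : p ∈ W) (hq : q ∈ W)
    (hpo : ∀ w ∈ W, sip (hmat *ᵥ (x - p)) w = 0)
    (hqo : ∀ w ∈ W, sip (hmat *ᵥ (x - q)) w = 0) : p = q := by
  by_contra hne
  have hd : p - q ≠ 0 := sub_ne_zero.mpr hne
  have hdW : p - q ∈ W := W.sub_mem hp hq
  have h1 : sip (hmat *ᵥ (p - q)) (p - q) = 0 := by
    have e : sip (hmat *ᵥ (p - q)) (p - q)
        = sip (hmat *ᵥ (x - q)) (p - q) - sip (hmat *ᵥ (x - p)) (p - q) := by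
      rw [← sip_hsub]
      congr 1
      abel_nf
    rw [e, hqo _ hdW, hpo _ hdW, sub_zero]
  have h2 := hpd.dotProduct_mulVec_pos hd
  rw [sip_eq] at h1
  rw [h1] at h2
  exact lt_irrefl 0 h2

lemma sip_mulVec_basis {N r : ℕ} (z : Fin N → ℂ) (B : Matrix (Fin N) (Fin r) ℂ) (c : Fin r → ℂ) :
    sip z (B *ᵥ c) = star c ⬝ᵥ (Bᴴ *ᵥ z) := by
  rw [sip_eq, Matrix.star_mulVec, ← Matrix.dotProduct_mulVec]

/-- The key pointwise identity `⟪h p, h⁻¹ M q⟫ = ⟪Mᴴ p, q⟫`. -/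
lemma sip_inv_shift {N : ℕ} {hmat M : Matrix (Fin N) (Fin N) ℂ} (hherm : hmat.IsHermitian)
    (hdet : IsUnit hmat.det) (p q : Fin N → ℂ) :
    sip (hmat *ᵥ p) ((hmat⁻¹ * M) *ᵥ q) = sip (Mᴴ *ᵥ p) q := by
  rw [sip_eq, sip_eq, Matrix.star_mulVec, ← Matrix.dotProduct_mulVec, Matrix.mulVec_mulVec]
  congr 1
  rw [Matrix.conjTranspose_mul, Matrix.conjTranspose_nonsing_inv, hherm.eq,
    Matrix.mul_assoc, Matrix.nonsing_inv_mul _ hdet, Matrix.mul_one]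

/-- Existence of a smooth matrix-valued orthogonal projection onto `W`. -/
lemma exists_smooth_proj {m N : ℕ} {U : Set (Fin m → ℂ)}
    {h : (Fin m → ℂ) → Matrix (Fin N) (Fin N) ℂ}
    (hsm : ∀ a b, ContDiffOn ℝ (⊤:ℕ∞) (fun t => h t a b) U)
    (hpos : ∀ t ∈ U, (h t).PosDef)
    (W : Submodule ℂ (Fin N → ℂ)) :
    ∃ P : (Fin m → ℂ) → Matrix (Fin N) (Fin N) ℂ,
      (∀ a b, ContDiffOn ℝ (⊤:ℕ∞) (fun s => P s a b) U) ∧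
      (∀ s x, P s *ᵥ x ∈ W) ∧
      (∀ s ∈ U, ∀ x, ∀ w ∈ W, sip (h s *ᵥ (x - P s *ᵥ x)) w = 0) := by
  classical
  set r := Module.finrank ℂ W with hr
  set bW : Module.Basis (Fin r) ℂ W := Module.finBasis ℂ W with hbW
  set B : Matrix (Fin N) (Fin r) ℂ := Matrix.of (fun a i => (bW i : Fin N → ℂ) a) with hB
  have hBW : ∀ c : Fin r → ℂ, B *ᵥ c ∈ W := by
    intro c
    have e : B *ᵥ c = ∑ i, c i • (bW i : Fin N → ℂ) := by
      funext a
      simp [Matrix.mulVec, dotProduct, hB, Finset.sum_apply, mul_comm]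
    rw [e]
    exact Submodule.sum_mem _ fun i _ => Submodule.smul_mem _ _ (SetLike.coe_mem _)
  have hBsurj : ∀ w : Fin N → ℂ, w ∈ W → ∃ c, B *ᵥ c = w := by
    intro w hw
    refine ⟨fun i => bW.repr ⟨w, hw⟩ i, ?_⟩
    have hsum := bW.sum_repr ⟨w, hw⟩
    have := congrArg (fun z : W => (z : Fin N → ℂ)) hsum
    funext a
    have ha := congrFun this a
    simp only [Submodule.coe_sum, Submodule.coe_smul, Finset.sum_apply, Pi.smul_apply, smul_eq_mul] at ha
    rw [← ha]; simp only [Matrix.mulVec, dotProduct, hB, Matrix.of_apply]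
    exact Finset.sum_congr rfl fun i _ => mul_comm _ _
  have hBinj : ∀ c, B *ᵥ c = 0 → c = 0 := by
    intro c hc
    have e : ((∑ i, c i • bW i : W) : Fin N → ℂ) = B *ᵥ c := by
      funext a
      simp [Matrix.mulVec, dotProduct, hB, Finset.sum_apply, mul_comm]
    have h0 : (∑ i, c i • bW i) = (0 : W) := by
      apply Subtype.ext
      rw [e, hc]; rfl
    have := linearIndependent_iff'.1 bW.linearIndependent Finset.univ c (by simpa using h0)
    funext i; exact this i (Finset.mem_univ i)
  set G : (Fin m → ℂ) → Matrix (Fin r) (Fin r) ℂ := fun s => Bᴴ * h s * B with hG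
  have hGquad : ∀ s (d : Fin r → ℂ),
      star d ⬝ᵥ (G s *ᵥ d) = star (B *ᵥ d) ⬝ᵥ (h s *ᵥ (B *ᵥ d)) := by
    intro s d
    conv_rhs => rw [Matrix.star_mulVec, ← Matrix.dotProduct_mulVec, Matrix.mulVec_mulVec,
      Matrix.mulVec_mulVec]
  have hGdet : ∀ s ∈ U, IsUnit (G s).det := by
    intro s hs
    rw [← Matrix.isUnit_iff_isUnit_det]
    rw [← Matrix.mulVec_injective_iff_isUnit]
    have hker : ∀ d, G s *ᵥ d = 0 → d = 0 := by
      intro d hd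
      by_contra hd0
      have hBd : B *ᵥ d ≠ 0 := fun hz => hd0 (hBinj d hz)
      have hp := (hpos s hs).dotProduct_mulVec_pos hBd
      rw [← hGquad s d, hd] at hp
      simp at hp
    intro c c' hcc
    have h0 : G s *ᵥ (c - c') = 0 := by
      rw [Matrix.mulVec_sub, hcc, sub_self]
    exact sub_eq_zero.mp (hker _ h0)
  refine ⟨fun s => B * (G s)⁻¹ * Bᴴ * h s, ?_, ?_, ?_⟩
  · have hGsm : ∀ a b, ContDiffOn ℝ (⊤:ℕ∞) (fun s => G s a b) U :=
      sm_mul_entries (sm_mul_entries (fun a b => contDiffOn_const) hsm)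
        (fun a b => contDiffOn_const)
    have hGinv : ∀ a b, ContDiffOn ℝ (⊤:ℕ∞) (fun s => (G s)⁻¹ a b) U :=
      sm_inv_entries hGsm hGdet
    exact sm_mul_entries (sm_mul_entries (sm_mul_entries
      (fun a b => contDiffOn_const) hGinv) (fun a b => contDiffOn_const)) hsm
  · intro s x
    have e : (B * (G s)⁻¹ * Bᴴ * h s) *ᵥ x = B *ᵥ (((G s)⁻¹ * Bᴴ * h s) *ᵥ x) := by
      rw [Matrix.mulVec_mulVec, ← Matrix.mul_assoc, ← Matrix.mul_assoc]
    rw [e]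
    exact hBW _
  · intro s hs x w hw
    obtain ⟨c, rfl⟩ := hBsurj w hw
    rw [sip_mulVec_basis]
    have key : Bᴴ *ᵥ (h s *ᵥ (x - (B * (G s)⁻¹ * Bᴴ * h s) *ᵥ x)) = 0 := by
      rw [Matrix.mulVec_sub, Matrix.mulVec_sub]
      have e2 : Bᴴ *ᵥ (h s *ᵥ ((B * (G s)⁻¹ * Bᴴ * h s) *ᵥ x))
          = (Bᴴ * h s * (B * (G s)⁻¹ * Bᴴ * h s)) *ᵥ x := by
        rw [Matrix.mulVec_mulVec, Matrix.mulVec_mulVec, Matrix.mul_assoc]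
      rw [e2]
      have e3 : Bᴴ * h s * (B * (G s)⁻¹ * Bᴴ * h s) = Bᴴ * h s := by
        have h1 : G s * (G s)⁻¹ = 1 := Matrix.mul_nonsing_inv _ (hGdet s hs)
        calc Bᴴ * h s * (B * (G s)⁻¹ * Bᴴ * h s)
            = (Bᴴ * h s * B * (G s)⁻¹) * (Bᴴ * h s) := by
              simp only [Matrix.mul_assoc]
          _ = Bᴴ * h s := by
              have hGs : G s = Bᴴ * h s * B := rfl
              rw [← Matrix.mul_assoc, ← hGs, h1, Matrix.one_mul]
      rw [e3, Matrix.mulVec_mulVec]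
      simp
    rw [key]
    simp


/-- **Griffiths' formula (2.4) for the curvature of a subbundle (Section 2):** if `π(t)` is
the `h(t)`-orthogonal projection onto the subspace `W` and `E = U×W` carries the induced
metric, with `D^E_j u = π·(D_j u)` and `Θ^E_{jk}u = D^E_j(∂̄_k u) − ∂̄_k(D^E_j u)`, then for
smooth sections `u, v` of `E`,
`⟪h·Θ_{jk}·u, v⟫ = ⟪h·π_⊥(D_j u), π_⊥(D_k v)⟫ + ⟪h·Θ^E_{jk}u, v⟫` on `U`. -/
theorem stmt11 {m N : ℕ}
    (U : Set (Fin m → ℂ)) (hU : IsOpen U)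
    (h : (Fin m → ℂ) → Matrix (Fin N) (Fin N) ℂ)
    (hsm : ∀ a b, ContDiffOn ℝ (⊤ : ℕ∞) (fun t => h t a b) U)
    (hpos : ∀ t ∈ U, (h t).PosDef)
    (W : Submodule ℂ (Fin N → ℂ))
    (π : (Fin m → ℂ) → (Fin N → ℂ) → (Fin N → ℂ))
    (hπmem : ∀ t ∈ U, ∀ x, π t x ∈ W)
    (hπorth : ∀ t ∈ U, ∀ x, ∀ y ∈ W, sip (h t *ᵥ (x - π t x)) y = 0)
    (u v : (Fin m → ℂ) → (Fin N → ℂ))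
    (husm : ∀ a, ContDiffOn ℝ (⊤ : ℕ∞) (fun t => u t a) U)
    (hvsm : ∀ a, ContDiffOn ℝ (⊤ : ℕ∞) (fun t => v t a) U)
    (huW : ∀ t ∈ U, u t ∈ W) (hvW : ∀ t ∈ U, v t ∈ W) :
    ∀ j k : Fin m, ∀ t ∈ U,
      sip (h t *ᵥ (curv h j k t *ᵥ u t)) (v t) =
        sip (h t *ᵥ (chern h u j t - π t (chern h u j t)))
            (chern h v k t - π t (chern h v k t))
          + sip (h t *ᵥ
              (π t (chern h (fun s => vDbar u s k) j t)
                - vDbar (fun s => π s (chern h u j s)) t k)) (v t) := by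
  classical
  intro j k t ht
  have hUt : U ∈ nhds t := hU.mem_nhds ht
  have hdiff : ∀ {f : (Fin m → ℂ) → ℂ}, ContDiffOn ℝ (⊤:ℕ∞) f U → DifferentiableAt ℝ f t :=
    fun hf => sm_diffAt hU hf ht
  obtain ⟨P, hPsm, hPmem, hPorth⟩ := exists_smooth_proj hsm hpos W
  -- π agrees with the smooth projection on U
  have hπP : ∀ s ∈ U, ∀ x, π s x = P s *ᵥ x := fun s hs x =>
    proj_unique (hpos s hs) (hπmem s hs x) (hPmem s x)
      (fun w hw => hπorth s hs x w hw) (fun w hw => hPorth s hs x w hw)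
  -- basic smoothness facts
  have hdetU : ∀ s ∈ U, IsUnit (h s).det := fun s hs =>
    (Matrix.isUnit_iff_isUnit_det _).1 (hpos s hs).isUnit
  have hinv_sm : ∀ a b, ContDiffOn ℝ (⊤:ℕ∞) (fun s => (h s)⁻¹ a b) U :=
    sm_inv_entries hsm hdetU
  have hmD_sm : ∀ a b, ContDiffOn ℝ (⊤:ℕ∞) (fun s => mD h s j a b) U := fun a b =>
    sm_wD hU (hsm a b) _
  have hM_sm : ∀ a b, ContDiffOn ℝ (⊤:ℕ∞) (fun s => ((h s)⁻¹ * mD h s j) a b) U :=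
    sm_mul_entries hinv_sm hmD_sm
  have hchu_sm : ∀ b, ContDiffOn ℝ (⊤:ℕ∞) (fun s => chern h u j s b) U := by
    intro b
    have e : (fun s => chern h u j s b) = fun s =>
        wD (fun s' => u s' b) s (Pi.single j 1)
          + ∑ c, ((h s)⁻¹ * mD h s j) b c * u s c := by
      funext s; simp [chern, vD, Matrix.mulVec, dotProduct]
    rw [e]
    exact (sm_wD hU (husm b) _).add (ContDiffOn.sum fun c _ => (hM_sm b c).mul (husm c))
  -- the second fundamental form piece (smooth version)
  set AuP : (Fin m → ℂ) → Fin N → ℂ := fun s => chern h u j s - P s *ᵥ chern h u j s with hAuP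
  have hAuP_sm : ∀ b, ContDiffOn ℝ (⊤:ℕ∞) (fun s => AuP s b) U := by
    intro b
    have e : (fun s => AuP s b)
        = fun s => chern h u j s b - ∑ c, P s b c * chern h u j s c := by
      funext s; simp [hAuP, Matrix.mulVec, dotProduct]
    rw [e]
    exact (hchu_sm b).sub (ContDiffOn.sum fun c _ => (hPsm b c).mul (hchu_sm c))
  have hπev : ∀ b, (fun s => π s (chern h u j s) b)
      =ᶠ[nhds t] (fun s => chern h u j s b - AuP s b) := by
    intro b
    filter_upwards [hUt] with s hs
    rw [hπP s hs]
    simp [hAuP]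
  -- Step A : the curvature identity Θ·u = D_j(∂̄_k u) − ∂̄_k(D_j u)
  have curvid : curv h j k t *ᵥ u t
      = chern h (fun s => vDbar u s k) j t - vDbar (fun s => chern h u j s) t k := by
    funext a
    have hsplit : (fun s => chern h u j s a) = fun s =>
        wD (fun s' => u s' a) s (Pi.single j 1)
          + ∑ b, ((h s)⁻¹ * mD h s j) a b * u s b := by
      funext s; simp [chern, vD, Matrix.mulVec, dotProduct]
    have hd1 : DifferentiableAt ℝ (fun s => wD (fun s' => u s' a) s (Pi.single j 1)) t :=
      hdiff (sm_wD hU (husm a) _)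
    have hd2 : DifferentiableAt ℝ (fun s => ∑ b, ((h s)⁻¹ * mD h s j) a b * u s b) t :=
      hdiff (ContDiffOn.sum fun b _ => (hM_sm a b).mul (husm b))
    have e1 : vDbar (fun s => chern h u j s) t k a
        = wD (fun s => wDbar (fun s' => u s' a) s (Pi.single k 1)) t (Pi.single j 1)
          + ∑ b, (wDbar (fun s => ((h s)⁻¹ * mD h s j) a b) t (Pi.single k 1) * u t b
              + ((h t)⁻¹ * mD h t j) a b * wDbar (fun s => u s b) t (Pi.single k 1)) := by
      show wDbar (fun s => chern h u j s a) t (Pi.single k 1) = _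
      rw [hsplit, wDbar_add hd1 hd2,
        wDbar_sum _ (fun b s => ((h s)⁻¹ * mD h s j) a b * u s b) (fun b _ => ((hdiff (hM_sm a b)).mul (hdiff (husm b))))]
      congr 1
      · exact wirtinger_symm hU (husm a) ht _ _
      · exact Finset.sum_congr rfl fun b _ =>
          wDbar_mul (hdiff (hM_sm a b)) (hdiff (husm b))
    have e2 : chern h (fun s => vDbar u s k) j t a
        = wD (fun s => wDbar (fun s' => u s' a) s (Pi.single k 1)) t (Pi.single j 1)
          + ∑ b, ((h t)⁻¹ * mD h t j) a b * wDbar (fun s => u s b) t (Pi.single k 1) := by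
      simp [chern, vD, vDbar, Matrix.mulVec, dotProduct]
    have e3 : (curv h j k t *ᵥ u t) a
        = ∑ b, (- wDbar (fun s => ((h s)⁻¹ * mD h s j) a b) t (Pi.single k 1)) * u t b := by
      simp [curv, mDbar, Matrix.mulVec, dotProduct]
    show (curv h j k t *ᵥ u t) a = chern h (fun s => vDbar u s k) j t a
      - vDbar (fun s => chern h u j s) t k a
    rw [e3, e2, e1, Finset.sum_add_distrib]
    simp only [neg_mul, Finset.sum_neg_distrib]
    ring
  -- Step B : ⟨π x, v⟩ = ⟨x, v⟩
  have stepB : ∀ x, sip (h t *ᵥ π t x) (v t) = sip (h t *ᵥ x) (v t) := by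
    intro x
    have h0 := hπorth t ht x (v t) (hvW t ht)
    rw [sip_hsub] at h0
    exact (sub_eq_zero.mp h0).symm
  -- Step C : splitting ∂̄_k (π ∘ D_j u)
  have stepC : vDbar (fun s => π s (chern h u j s)) t k
      = vDbar (fun s => chern h u j s) t k - vDbar AuP t k := by
    funext b
    show wDbar (fun s => π s (chern h u j s) b) t (Pi.single k 1)
      = wDbar (fun s => chern h u j s b) t (Pi.single k 1)
        - wDbar (fun s => AuP s b) t (Pi.single k 1)
    rw [wDbar_congr (hπev b)]
    exact wDbar_sub (hdiff (hchu_sm b)) (hdiff (hAuP_sm b))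
  -- Step D : the second-fundamental-form term
  have hπt : ∀ x, π t x = P t *ᵥ x := hπP t ht
  have horthAuP : ∀ y ∈ W, sip (h t *ᵥ AuP t) y = 0 := by
    intro y hy
    have h0 := hπorth t ht (chern h u j t) y hy
    rw [hπt] at h0
    exact h0
  have stepD : sip (h t *ᵥ (chern h u j t - π t (chern h u j t)))
      (chern h v k t - π t (chern h v k t)) = sip (h t *ᵥ AuP t) (chern h v k t) := by
    have e : chern h u j t - π t (chern h u j t) = AuP t := by rw [hπt]
    rw [e, sip_sub_right, horthAuP _ (hπmem t ht _), sub_zero]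
  -- Step E : metric compatibility
  have hφ0 : (fun s => sip (h s *ᵥ AuP s) (v s)) =ᶠ[nhds t] (fun _ => (0:ℂ)) := by
    filter_upwards [hUt] with s hs
    have h0 := hπorth s hs (chern h u j s) (v s) (hvW s hs)
    rw [hπP s hs] at h0
    exact h0
  have hwd0 : wDbar (fun s => sip (h s *ᵥ AuP s) (v s)) t (Pi.single k 1) = 0 := by
    rw [wDbar_congr hφ0]
    exact wDbar_zero
  have hexp : (fun s => sip (h s *ᵥ AuP s) (v s))
      = fun s => ∑ a, ∑ b, h s a b * AuP s b * (starRingEnd ℂ) (v s a) := by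
    funext s
    simp [sip, Matrix.mulVec, dotProduct, Finset.sum_mul]
  have hterms : wDbar (fun s => sip (h s *ᵥ AuP s) (v s)) t (Pi.single k 1)
      = ∑ a, ∑ b,
          (wDbar (fun s => h s a b) t (Pi.single k 1) * AuP t b * (starRingEnd ℂ) (v t a)
          + h t a b * wDbar (fun s => AuP s b) t (Pi.single k 1) * (starRingEnd ℂ) (v t a)
          + h t a b * AuP t b
              * (starRingEnd ℂ) (wD (fun s => v s a) t (Pi.single k 1))) := by
    rw [hexp, wDbar_sum _ _ (fun a _ => hdiff (ContDiffOn.sum fun b _ =>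
      ((hsm a b).mul (hAuP_sm b)).mul (sm_conj (hvsm a))))]
    refine Finset.sum_congr rfl fun a _ => ?_
    rw [wDbar_sum _ _ (fun b _ => hdiff (((hsm a b).mul (hAuP_sm b)).mul (sm_conj (hvsm a))))]
    refine Finset.sum_congr rfl fun b _ => ?_
    rw [wDbar_mul (hdiff ((hsm a b).mul (hAuP_sm b))) (hdiff (sm_conj (hvsm a))),
      wDbar_mul (hdiff (hsm a b)) (hdiff (hAuP_sm b)), wDbar_conj]
    ring
  have hT1 : ∑ a, ∑ b, wDbar (fun s => h s a b) t (Pi.single k 1) * AuP t b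
        * (starRingEnd ℂ) (v t a)
      = sip ((mDbar h t k) *ᵥ AuP t) (v t) := by
    simp [sip, mDbar, Matrix.mulVec, dotProduct, Finset.sum_mul]
  have hT2 : ∑ a, ∑ b, h t a b * wDbar (fun s => AuP s b) t (Pi.single k 1)
        * (starRingEnd ℂ) (v t a)
      = sip (h t *ᵥ vDbar AuP t k) (v t) := by
    simp [sip, vDbar, Matrix.mulVec, dotProduct, Finset.sum_mul]
  have hT3 : ∑ a, ∑ b, h t a b * AuP t b
        * (starRingEnd ℂ) (wD (fun s => v s a) t (Pi.single k 1))
      = sip (h t *ᵥ AuP t) (vD v t k) := by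
    simp [sip, vD, Matrix.mulVec, dotProduct, Finset.sum_mul]
  have hmDH : (mD h t k)ᴴ = mDbar h t k := by
    ext a b
    rw [Matrix.conjTranspose_apply]
    show star (wD (fun s => h s b a) t (Pi.single k 1))
      = wDbar (fun s => h s a b) t (Pi.single k 1)
    have hev2 : (fun s => h s a b) =ᶠ[nhds t] (fun s => (starRingEnd ℂ) (h s b a)) := by
      filter_upwards [hUt] with s hs
      exact ((hpos s hs).isHermitian.apply a b).symm
    rw [wDbar_congr hev2, wDbar_conj]
    rfl
  have hDkv : sip (h t *ᵥ AuP t) (chern h v k t)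
      = sip (h t *ᵥ AuP t) (vD v t k) + sip ((mDbar h t k) *ᵥ AuP t) (v t) := by
    have e : chern h v k t = vD v t k + ((h t)⁻¹ * mD h t k) *ᵥ v t := rfl
    rw [e, sip_add_right]
    congr 1
    rw [sip_inv_shift (hpos t ht).isHermitian (hdetU t ht), hmDH]
  have stepE : sip (h t *ᵥ AuP t) (chern h v k t)
      + sip (h t *ᵥ vDbar AuP t k) (v t) = 0 := by
    have h0 := hwd0
    rw [hterms] at h0
    simp only [Finset.sum_add_distrib] at h0
    rw [hT1, hT2, hT3] at h0
    rw [hDkv]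
    linear_combination h0
  -- final assembly
  rw [stepD, curvid, stepC]
  simp only [sip_hsub]
  rw [stepB]
  linear_combination -stepE
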